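/- Let F : ℝⁿ → ℝⁿ be C¹, X ⊂ ℝⁿ an interval (box) set, x ∈ X, and C an invertible n×n matrix. Define K(x, X, F) := x − C·F(x) + (Id − C·[DF(X)])·(X − x), where [DF(X)] is an interval matrix enclosure of the derivatives of F over X. If K(x, X, F) ⊂ int X, then there exists a unique point x* ∈ X with F(x*) = 0. -/

import Mathlib

open Set

set_option maxHeartbeats 1000000

section Aux
open Finset

lemma clm_apply_eq_sum (n : ℕ) (L : (Fin n → ℝ) →L[ℝ] (Fin n → ℝ)) (v : Fin n → ℝ) (i : Fin n) :
    L v i = ∑ j, v j * L (Pi.single j 1) i := by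
  have hv : v = ∑ j, v j • (Pi.single j (1:ℝ) : Fin n → ℝ) := by
    conv_lhs => rw [← Finset.univ_sum_single v]
    refine Finset.sum_congr rfl fun j _ => ?_
    funext k
    by_cases h : k = j <;> simp [h, Pi.single_apply]
  conv_lhs => rw [hv, map_sum]
  simp [Finset.sum_apply, smul_eq_mul]

lemma mvt_comp (n : ℕ) (F : (Fin n → ℝ) → (Fin n → ℝ)) (hF : ContDiff ℝ 1 F)
    (X : Set (Fin n → ℝ)) (hXc : Convex ℝ X) (y y' : Fin n → ℝ)
    (hy : y ∈ X) (hy' : y' ∈ X) (i : Fin n) :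
    ∃ ξ ∈ X, F y i - F y' i = fderiv ℝ F ξ (y - y') i := by
  set γ : ℝ → (Fin n → ℝ) := fun t => y' + t • (y - y') with hγdef
  have hγmem : ∀ t ∈ Icc (0:ℝ) 1, γ t ∈ X := by
    intro t ht
    have h := hXc hy' hy (by linarith [ht.2] : (0:ℝ) ≤ 1 - t) ht.1 (by ring)
    have : (1 - t) • y' + t • y = γ t := by
      simp only [hγdef]
      module
    rwa [this] at h
  have hγc : Continuous γ := continuous_const.add (continuous_id.smul continuous_const)
  have hder : ∀ t : ℝ, HasDerivAt (fun t => F (γ t) i) (fderiv ℝ F (γ t) (y - y') i) t := by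
    intro t
    have hγd : HasDerivAt γ (y - y') t := by
      have := ((hasDerivAt_id t).smul_const (y - y')).const_add y'
      simpa [hγdef] using this
    have hFd : HasFDerivAt F (fderiv ℝ F (γ t)) (γ t) :=
      ((hF.differentiable one_ne_zero) (γ t)).hasFDerivAt
    have hcomp := hFd.comp_hasDerivAt t hγd
    have hproj := (ContinuousLinearMap.proj (R := ℝ) (φ := fun _ : Fin n => ℝ) i).hasFDerivAt
      (x := F (γ t))
    exact (hasDerivAt_pi.mp hcomp) i
  obtain ⟨c, hc, hceq⟩ := exists_hasDerivAt_eq_slope (fun t => F (γ t) i)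
    (fun t => fderiv ℝ F (γ t) (y - y') i) one_pos
    (((continuous_apply i).comp (hF.continuous.comp hγc)).continuousOn)
    (fun t _ => hder t)
  refine ⟨γ c, hγmem c ⟨le_of_lt hc.1, le_of_lt hc.2⟩, ?_⟩
  have h1 : γ 1 = y := by simp [hγdef]
  have h0 : γ 0 = y' := by simp [hγdef]
  rw [h1, h0] at hceq
  rw [hceq]
  ring


end Aux

/-- **Krawczyk method.** If the Krawczyk set
`K(x, X, F) = x - C·F(x) + (Id - C·[DF(X)])·(X - x)` is contained in the interior of the
interval (box) set `X`, then `F` has a unique zero in `X`. Here `[DF(X)]` is the interval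
matrix enclosure of the derivatives of `F` over `X`. -/
theorem krawczyk_method (n : ℕ) (F : (Fin n → ℝ) → (Fin n → ℝ))
    (hF : ContDiff ℝ 1 F)
    (a b : Fin n → ℝ) (X : Set (Fin n → ℝ)) (hX : X = Set.univ.pi fun i => Set.Icc (a i) (b i))
    (x : Fin n → ℝ) (hx : x ∈ X)
    (C : Matrix (Fin n) (Fin n) ℝ) (hC : IsUnit C)
    -- the interval matrix enclosure of the derivatives of `F` over `X`
    (D : Set (Matrix (Fin n) (Fin n) ℝ))
    (hD : D = {A | ∀ i j,
      A i j ∈ Set.Icc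
        (sInf ((fun y => fderiv ℝ F y (Pi.single j 1) i) '' X))
        (sSup ((fun y => fderiv ℝ F y (Pi.single j 1) i) '' X))})
    -- the Krawczyk set
    (K : Set (Fin n → ℝ))
    (hK : K = (fun p : Matrix (Fin n) (Fin n) ℝ × (Fin n → ℝ) =>
      x - C.mulVec (F x) + ((1 : Matrix (Fin n) (Fin n) ℝ) - C * p.1).mulVec (p.2 - x)) ''
      (D ×ˢ X))
    (hKsub : K ⊆ interior X) :
    ∃! z : Fin n → ℝ, z ∈ X ∧ F z = 0 := by
  rcases Nat.eq_zero_or_pos n with hn | hn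
  · have hz : ∀ u v : Fin n → ℝ, u = v := by
      intro u v; funext i; exact absurd i.isLt (by omega)
    exact ⟨x, ⟨hx, hz _ _⟩, fun z _ => hz _ _⟩
  haveI : Nonempty (Fin n) := ⟨⟨0, hn⟩⟩
  have hXc : Convex ℝ X := hX ▸ convex_pi fun i _ => convex_Icc _ _
  have hXcomp : IsCompact X := hX ▸ isCompact_univ_pi fun i => isCompact_Icc
  -- continuity of entries of the derivative
  have hcont : ∀ i j : Fin n, Continuous fun y => fderiv ℝ F y (Pi.single j 1) i :=
    fun i j => (continuous_apply i).comp
      ((hF.continuous_fderiv one_ne_zero).clm_apply continuous_const)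
  -- mean value theorem with interval matrix
  have hMVT : ∀ y ∈ X, ∀ y' ∈ X, ∃ A ∈ D, F y - F y' = A.mulVec (y - y') := by
    intro y hy y' hy'
    choose ξ hξX hξeq using fun i => mvt_comp n F hF X hXc y y' hy hy' i
    refine ⟨Matrix.of fun i j => fderiv ℝ F (ξ i) (Pi.single j 1) i, ?_, ?_⟩
    · rw [hD]
      intro i j
      exact ⟨csInf_le ((hXcomp.image (hcont i j)).bddBelow)
          (mem_image_of_mem _ (hξX i)),
        le_csSup ((hXcomp.image (hcont i j)).bddAbove)
          (mem_image_of_mem _ (hξX i))⟩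
    · funext i
      have h1 : F y i - F y' i = fderiv ℝ F (ξ i) (y - y') i := hξeq i
      have h2 := clm_apply_eq_sum n (fderiv ℝ F (ξ i)) (y - y') i
      simp only [Pi.sub_apply, Matrix.mulVec, dotProduct, Matrix.of_apply]
      rw [h1, h2]
      exact Finset.sum_congr rfl fun j _ => by rw [mul_comm]; rfl
  -- D is nonempty, hence K is nonempty, hence the interior of X is nonempty
  obtain ⟨A₀, hA₀, -⟩ := hMVT x hx x hx
  have hK₀ : x - C.mulVec (F x) + ((1 : Matrix (Fin n) (Fin n) ℝ) - C * A₀).mulVec (x - x) ∈ K := by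
    rw [hK, Set.mem_image]; exact ⟨(A₀, x), Set.mk_mem_prod hA₀ hx, rfl⟩
  have hlt : ∀ i, a i < b i := by
    have hint := hKsub hK₀
    rw [hX, interior_pi_set finite_univ] at hint
    intro i
    have := hint i (mem_univ i)
    simp only [interior_Icc] at this
    exact this.1.trans this.2
  set w : Fin n → ℝ := fun i => b i - a i with hwdef
  have hw : ∀ i, 0 < w i := fun i => sub_pos.mpr (hlt i)
  have hmemX : ∀ z : Fin n → ℝ, z ∈ X ↔ ∀ i, a i ≤ z i ∧ z i ≤ b i := by
    intro z
    rw [hX]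
    simp only [Set.mem_pi, Set.mem_univ, Set.mem_Icc, true_implies]
  -- Key row bound from K ⊆ interior X
  have hrow : ∀ A ∈ D, ∀ i, ∑ j, |((1 : Matrix (Fin n) (Fin n) ℝ) - C * A) i j| * w j < w i := by
    intro A hA i
    set L : Matrix (Fin n) (Fin n) ℝ := 1 - C * A with hLdef
    set yp : Fin n → ℝ := fun j => if 0 ≤ L i j then b j else a j with hypdef
    set ym : Fin n → ℝ := fun j => if 0 ≤ L i j then a j else b j with hymdef
    have hypX : yp ∈ X := by
      rw [hmemX]; intro j
      by_cases h : 0 ≤ L i j <;> simp [hypdef, h, (hlt j).le]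
    have hymX : ym ∈ X := by
      rw [hmemX]; intro j
      by_cases h : 0 ≤ L i j <;> simp [hymdef, h, (hlt j).le]
    have hp : x - C.mulVec (F x) + L.mulVec (yp - x) ∈ interior X := by
      apply hKsub; rw [hK, Set.mem_image]; exact ⟨(A, yp), Set.mk_mem_prod hA hypX, rfl⟩
    have hm : x - C.mulVec (F x) + L.mulVec (ym - x) ∈ interior X := by
      apply hKsub; rw [hK, Set.mem_image]; exact ⟨(A, ym), Set.mk_mem_prod hA hymX, rfl⟩
    rw [hX, interior_pi_set finite_univ] at hp hm
    have hpi := hp i (mem_univ i)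
    have hmi := hm i (mem_univ i)
    simp only [interior_Icc] at hpi hmi
    have hsum : ∑ j, |L i j| * w j =
        (x - C.mulVec (F x) + L.mulVec (yp - x)) i -
        (x - C.mulVec (F x) + L.mulVec (ym - x)) i := by
      have hterm : ∀ j, |L i j| * w j =
          L i j * (yp j - x j) - L i j * (ym j - x j) := by
        intro j
        by_cases h : 0 ≤ L i j
        · rw [abs_of_nonneg h]; simp only [hypdef, hymdef, if_pos h, hwdef]; ring
        · rw [abs_of_neg (lt_of_not_ge h)]; simp only [hypdef, hymdef, if_neg h, hwdef]; ring
      simp only [Pi.add_apply, Pi.sub_apply, Matrix.mulVec, dotProduct]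
      rw [Finset.sum_congr rfl fun j _ => hterm j, Finset.sum_sub_distrib]
      ring
    rw [hsum]
    simp only [hwdef]
    have h1 := hpi.2
    have h2 := hmi.1
    simp only [Pi.add_apply, Pi.sub_apply] at h1 h2 ⊢
    linarith
  -- the simplified Newton map
  set g : (Fin n → ℝ) → (Fin n → ℝ) := fun y => y - C.mulVec (F y) with hgdef
  have hgc : Continuous g := by
    apply continuous_id.sub
    exact (C.mulVecLin.continuous_of_finiteDimensional).comp hF.continuous
  have hgK : ∀ y ∈ X, g y ∈ K := by
    intro y hy
    obtain ⟨A, hA, hAeq⟩ := hMVT y hy x hx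
    rw [hK, Set.mem_image]
    refine ⟨(A, y), Set.mk_mem_prod hA hy, ?_⟩
    show x - C.mulVec (F x) + ((1 : Matrix (Fin n) (Fin n) ℝ) - C * A).mulVec (y - x) = g y
    rw [Matrix.sub_mulVec, Matrix.one_mulVec, ← Matrix.mulVec_mulVec, ← hAeq,
      Matrix.mulVec_sub, hgdef]
    abel
  have hgX : ∀ y ∈ X, g y ∈ X := fun y hy => interior_subset (hKsub (hgK y hy))
  -- the weighted distance
  set Φ : (Fin n → ℝ) → (Fin n → ℝ) → ℝ := fun y y' => ‖(fun i => (y i - y' i) / w i)‖ with hΦdef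
  have hΦ0 : ∀ y y', 0 ≤ Φ y y' := fun y y' => norm_nonneg _
  have hΦcoord : ∀ y y' (i : Fin n), |y i - y' i| ≤ w i * Φ y y' := by
    intro y y' i
    have := norm_le_pi_norm (fun i => (y i - y' i) / w i) i
    rw [Real.norm_eq_abs, abs_div, abs_of_pos (hw i)] at this
    calc |y i - y' i| = w i * (|y i - y' i| / w i) := by
          rw [mul_comm, div_mul_cancel₀ _ (hw i).ne']
    _ ≤ w i * Φ y y' := by
        apply mul_le_mul_of_nonneg_left this (hw i).le
  have hΦeq0 : ∀ y y', Φ y y' = 0 → y = y' := by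
    intro y y' h
    funext i
    have := hΦcoord y y' i
    rw [h, mul_zero] at this
    have := abs_nonpos_iff.mp (this)
    linarith [sub_eq_zero.mp this]
  -- the contraction property
  have key : ∀ y ∈ X, ∀ y' ∈ X, y ≠ y' → Φ (g y) (g y') < Φ y y' := by
    intro y hy y' hy' hne
    obtain ⟨A, hA, hAeq⟩ := hMVT y hy y' hy'
    set L : Matrix (Fin n) (Fin n) ℝ := 1 - C * A with hLdef
    have hgsub : g y - g y' = L.mulVec (y - y') := by
      rw [hLdef, Matrix.sub_mulVec, Matrix.one_mulVec, ← Matrix.mulVec_mulVec, ← hAeq, hgdef]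
      simp only
      rw [Matrix.mulVec_sub]
      abel
    set c : ℝ := Finset.univ.sup' Finset.univ_nonempty
      (fun i => (∑ j, |L i j| * w j) / w i) with hcdef
    have hc1 : c < 1 := by
      rw [hcdef, Finset.sup'_lt_iff]
      intro i _
      rw [div_lt_one (hw i)]
      exact hrow A hA i
    have hΦpos : 0 < Φ y y' := by
      rcases lt_or_eq_of_le (hΦ0 y y') with h | h
      · exact h
      · exact absurd (hΦeq0 y y' h.symm) hne
    have hcoord : ∀ i, |(g y - g y') i| ≤ c * w i * Φ y y' := by
      intro i
      rw [hgsub]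
      have h1 : |(L.mulVec (y - y')) i| ≤ ∑ j, |L i j| * |y j - y' j| := by
        simp only [Matrix.mulVec, dotProduct]
        calc |∑ j, L i j * (y - y') j| ≤ ∑ j, |L i j * (y - y') j| :=
            Finset.abs_sum_le_sum_abs _ _
        _ = ∑ j, |L i j| * |y j - y' j| := by
            refine Finset.sum_congr rfl fun j _ => ?_
            rw [abs_mul]; rfl
      have h2 : ∑ j, |L i j| * |y j - y' j| ≤ (∑ j, |L i j| * w j) * Φ y y' := by
        rw [Finset.sum_mul]
        refine Finset.sum_le_sum fun j _ => ?_
        rw [mul_assoc]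
        exact mul_le_mul_of_nonneg_left (hΦcoord y y' j) (abs_nonneg _)
      have h3 : (∑ j, |L i j| * w j) ≤ c * w i := by
        have := Finset.le_sup' (fun i => (∑ j, |L i j| * w j) / w i) (Finset.mem_univ i)
        rw [← hcdef] at this
        calc (∑ j, |L i j| * w j) = ((∑ j, |L i j| * w j) / w i) * w i := by
              rw [div_mul_cancel₀ _ (hw i).ne']
        _ ≤ c * w i := mul_le_mul_of_nonneg_right this (hw i).le
      calc |(L.mulVec (y - y')) i| ≤ (∑ j, |L i j| * w j) * Φ y y' := h1.trans h2
      _ ≤ c * w i * Φ y y' := mul_le_mul_of_nonneg_right h3 (hΦ0 y y')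
    have hΦle : Φ (g y) (g y') ≤ c * Φ y y' := by
      have hcnn : 0 ≤ c := by
        obtain ⟨i₀⟩ := (inferInstance : Nonempty (Fin n))
        refine le_trans ?_
          (Finset.le_sup' (fun i => (∑ j, |L i j| * w j) / w i) (Finset.mem_univ i₀))
        exact div_nonneg (Finset.sum_nonneg fun j _ => mul_nonneg (abs_nonneg _) (hw j).le)
          (hw i₀).le
      rw [hΦdef]
      simp only
      rw [pi_norm_le_iff_of_nonneg (mul_nonneg hcnn (hΦ0 _ _))]
      intro i
      rw [Real.norm_eq_abs, abs_div, abs_of_pos (hw i), div_le_iff₀ (hw i)]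
      calc |g y i - g y' i| ≤ c * w i * Φ y y' := hcoord i
      _ = c * Φ y y' * w i := by ring
    calc Φ (g y) (g y') ≤ c * Φ y y' := hΦle
    _ < 1 * Φ y y' := by
        exact mul_lt_mul_of_pos_right hc1 hΦpos
    _ = Φ y y' := one_mul _
  -- existence: minimize Φ y (g y) over X
  have hΘcont : ContinuousOn (fun y => Φ y (g y)) X := by
    apply Continuous.continuousOn
    apply continuous_norm.comp
    apply continuous_pi
    intro i
    exact (((continuous_apply i).sub ((continuous_apply i).comp hgc)).div_const _)
  obtain ⟨y₀, hy₀X, hmin⟩ := hXcomp.exists_isMinOn ⟨x, hx⟩ hΘcont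
  have hfix : g y₀ = y₀ := by
    by_contra hne
    have h1 := hmin (hgX y₀ hy₀X)
    have h2 := key y₀ hy₀X (g y₀) (hgX y₀ hy₀X) (fun h => hne h.symm)
    exact absurd (h1.trans_lt h2) (lt_irrefl _)
  have hinv : C⁻¹ * C = 1 := Matrix.nonsing_inv_mul C ((Matrix.isUnit_iff_isUnit_det C).mp hC)
  have hFz : F y₀ = 0 := by
    have h0 : C.mulVec (F y₀) = 0 := by
      have := hfix
      rw [hgdef] at this
      simp only at this
      have := sub_eq_self.mp this
      exact this
    calc F y₀ = (C⁻¹ * C).mulVec (F y₀) := by rw [hinv, Matrix.one_mulVec]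
    _ = C⁻¹.mulVec (C.mulVec (F y₀)) := (Matrix.mulVec_mulVec _ _ _).symm
    _ = 0 := by rw [h0, Matrix.mulVec_zero]
  refine ⟨y₀, ⟨hy₀X, hFz⟩, ?_⟩
  rintro z ⟨hzX, hFz'⟩
  by_contra hne
  have hgz : g z = z := by rw [hgdef]; simp [hFz', Matrix.mulVec_zero]
  have hgy : g y₀ = y₀ := hfix
  have := key z hzX y₀ hy₀X hne
  rw [hgz, hgy] at this
  exact absurd this (lt_irrefl _)
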